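/- (Proposition, part (a)) Let p be a prime. For every point P ∈ 𝒫 ∖ S, the set C_P = {v ∈ Sym2 X : P ∈ L_v} is a clique of the graph G, i.e., any two distinct vertices v, v' ∈ C_P are adjacent in G. -/

import Mathlib

/-- Points of the concretely-defined finite projective plane of order `p`:
one point `alpha`, the points `beta y`, and the points `gamma x y`. -/
inductive ProjPoint (p : ℕ) : Type where
  | alpha : ProjPoint p
  | beta (y : ZMod p) : ProjPoint p
  | gamma (x y : ZMod p) : ProjPoint p

namespace ProjPoint

/-- The line `L_α = {P_α} ∪ {P_β(y) : y}`. -/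
def Lalpha (p : ℕ) : Set (ProjPoint p) :=
  {P | P = alpha ∨ ∃ y : ZMod p, P = beta y}

/-- The line `L_β(i) = {P_α} ∪ {P_γ(i,y) : y}`. -/
def Lbeta (p : ℕ) (i : ZMod p) : Set (ProjPoint p) :=
  {P | P = alpha ∨ ∃ y : ZMod p, P = gamma i y}

/-- The line `L_γ(i,j) = {P_β(i)} ∪ {P_γ(k, i·k + j) : k}`. -/
def Lgamma (p : ℕ) (i j : ZMod p) : Set (ProjPoint p) :=
  {P | P = beta i ∨ ∃ k : ZMod p, P = gamma k (i * k + j)}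

/-- The set of lines `ℒ`. -/
def Lines (p : ℕ) : Set (Set (ProjPoint p)) :=
  {Lalpha p} ∪ {L | ∃ i : ZMod p, L = Lbeta p i} ∪
    {L | ∃ i j : ZMod p, L = Lgamma p i j}

/-- The set `S = {P_α} ∪ {P_γ(k, k²) : k}`. -/
def S (p : ℕ) : Set (ProjPoint p) :=
  {P | P = alpha ∨ ∃ k : ZMod p, P = gamma k (k ^ 2)}

end ProjPoint

namespace ProjPoint

/-- Indexing of `S` by `X = Option (ZMod p)`: `Spt none = P_α` and
`Spt (some k) = P_γ(k, k²)`. -/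
def Spt (p : ℕ) : Option (ZMod p) → ProjPoint p
  | none => alpha
  | some k => gamma k (k ^ 2)

/-- The graph `G` on unordered pairs (diagonal allowed) from `X = Option (ZMod p)`,
where two distinct vertices are adjacent iff no element of `X` belongs to both. -/
def G (p : ℕ) : SimpleGraph (Sym2 (Option (ZMod p))) where
  Adj v w := v ≠ w ∧ ∀ x : Option (ZMod p), ¬(x ∈ v ∧ x ∈ w)
  symm := ⟨fun v w h => ⟨h.1.symm, fun x hx => h.2 x ⟨hx.2, hx.1⟩⟩⟩
  loopless := ⟨fun v h => h.1 rfl⟩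

end ProjPoint



open ProjPoint

section Aux
variable {p : ℕ}

lemma spt_mem_S (p : ℕ) (l : Option (ZMod p)) : Spt p l ∈ S p := by
  cases l with
  | none => exact Or.inl rfl
  | some k => exact Or.inr ⟨k, rfl⟩

lemma spt_inj {l l' : Option (ZMod p)} (h : Spt p l = Spt p l') : l = l' := by
  cases l <;> cases l' <;> simp_all [Spt]

lemma line_unique [Fact p.Prime] {L L' : Set (ProjPoint p)}
    (hL : L ∈ Lines p) (hL' : L' ∈ Lines p) {P Q : ProjPoint p} (hPQ : P ≠ Q)
    (hP : P ∈ L) (hQ : Q ∈ L) (hP' : P ∈ L') (hQ' : Q ∈ L') : L = L' := by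
  rcases hL with (rfl | ⟨i, rfl⟩) | ⟨a, b, rfl⟩ <;>
    rcases hL' with (rfl | ⟨i', rfl⟩) | ⟨a', b', rfl⟩ <;>
      simp only [Lalpha, Lbeta, Lgamma, Set.mem_setOf_eq] at hP hQ hP' hQ'
  · rfl
  · -- Lalpha vs Lbeta i'
    rcases hP with rfl | ⟨y, rfl⟩ <;> rcases hP' with h | ⟨y', h⟩ <;> try simp_all
    rcases hQ with rfl | ⟨z, rfl⟩ <;> rcases hQ' with h | ⟨z', h⟩ <;> simp_all
  · -- Lalpha vs Lgamma
    rcases hP with rfl | ⟨y, rfl⟩ <;> rcases hP' with h | ⟨k, h⟩ <;> try simp_all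
    rcases hQ with rfl | ⟨z, rfl⟩ <;> rcases hQ' with h2 | ⟨k2, h2⟩ <;> simp_all
  · -- Lbeta vs Lalpha
    rcases hP with rfl | ⟨y, rfl⟩ <;> rcases hP' with h | ⟨y', h⟩ <;> try simp_all
    rcases hQ with rfl | ⟨z, rfl⟩ <;> rcases hQ' with h | ⟨z', h⟩ <;> simp_all
  · -- Lbeta i vs Lbeta i'
    rcases hP with rfl | ⟨y, rfl⟩ <;> rcases hP' with h | ⟨y', h⟩ <;> try simp_all
    · rcases hQ with rfl | ⟨z, rfl⟩ <;> rcases hQ' with h | ⟨z', h⟩ <;> simp_all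
  · -- Lbeta i vs Lgamma a' b'
    rcases hP with rfl | ⟨y, rfl⟩ <;> rcases hP' with h | ⟨k, h⟩ <;>
      rcases hQ with rfl | ⟨z, rfl⟩ <;> rcases hQ' with h2 | ⟨k2, h2⟩ <;> simp_all
  · -- Lgamma vs Lalpha
    rcases hP with rfl | ⟨k, rfl⟩ <;> rcases hP' with h | ⟨y, h⟩ <;>
      rcases hQ with rfl | ⟨k2, rfl⟩ <;> rcases hQ' with h2 | ⟨y2, h2⟩ <;> simp_all
  · -- Lgamma vs Lbeta
    rcases hP with rfl | ⟨k, rfl⟩ <;> rcases hP' with h | ⟨y, h⟩ <;>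
      rcases hQ with rfl | ⟨k2, rfl⟩ <;> rcases hQ' with h2 | ⟨y2, h2⟩ <;> simp_all
    obtain ⟨rfl, rfl⟩ := h
    obtain ⟨rfl, rfl⟩ := h2
    exact absurd rfl hPQ
  · -- Lgamma a b vs Lgamma a' b'
    rcases hP with rfl | ⟨k, rfl⟩
    · rcases hP' with h | ⟨k', h⟩
      · obtain rfl : a = a' := by injection h
        rcases hQ with rfl | ⟨m, rfl⟩
        · exact absurd rfl hPQ
        · rcases hQ' with h2 | ⟨m', h2⟩
          · exact absurd h2 (by simp)
          · obtain ⟨rfl, h2⟩ : m = m' ∧ a * m + b = a * m' + b' := by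
              injection h2 with h3 h4; exact ⟨h3, h4⟩
            obtain rfl : b = b' := by linear_combination h2
            rfl
      · exact absurd h (by simp)
    · rcases hP' with h | ⟨k', h⟩
      · exact absurd h (by simp)
      · obtain ⟨rfl, h⟩ : k = k' ∧ a * k + b = a' * k' + b' := by
          injection h with h3 h4; exact ⟨h3, h4⟩
        rcases hQ with rfl | ⟨m, rfl⟩
        · rcases hQ' with h2 | ⟨m', h2⟩
          · obtain rfl : a = a' := by injection h2
            obtain rfl : b = b' := by linear_combination h
            rfl
          · exact absurd h2 (by simp)
        · rcases hQ' with h2 | ⟨m', h2⟩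
          · exact absurd h2 (by simp)
          · obtain ⟨rfl, h2⟩ : m = m' ∧ a * m + b = a' * m' + b' := by
              injection h2 with h3 h4; exact ⟨h3, h4⟩
            have hkm : k ≠ m := by rintro rfl; exact hPQ rfl
            have ha : a = a' := by
              have h3 : (a - a') * (k - m) = 0 := by linear_combination h - h2
              rcases mul_eq_zero.mp h3 with h4 | h4
              · exact sub_eq_zero.mp h4
              · exact absurd (sub_eq_zero.mp h4) hkm
            subst ha
            obtain rfl : b = b' := by linear_combination h
            rfl

end Aux

lemma arc {p : ℕ} [Fact p.Prime] {L : Set (ProjPoint p)} (hL : L ∈ Lines p)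
    {a b c : Option (ZMod p)} (hab : a ≠ b) (hac : a ≠ c) (hbc : b ≠ c)
    (ha : Spt p a ∈ L) (hb : Spt p b ∈ L) (hc : Spt p c ∈ L) : False := by
  rcases hL with (rfl | ⟨i, rfl⟩) | ⟨u, w, rfl⟩
  · have key : ∀ x : Option (ZMod p), Spt p x ∈ Lalpha p → x = none := by
      rintro (_ | k) hx
      · rfl
      · rcases hx with h | ⟨y, h⟩ <;> simp [Spt] at h
    exact hab ((key a ha).trans (key b hb).symm)
  · have key : ∀ x : ZMod p, Spt p (some x) ∈ Lbeta p i → x = i := by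
      intro x hx
      rcases hx with h | ⟨y, h⟩ <;> simp [Spt] at h
      exact h.1
    match a, b, c with
    | none, none, _ => exact hab rfl
    | none, some k, some m => exact hbc (by rw [key k hb, key m hc])
    | some k, none, some m => exact hac (by rw [key k ha, key m hc])
    | some k, some m, _ => exact hab (by rw [key k ha, key m hb])
  · have key : ∀ x : Option (ZMod p), Spt p x ∈ Lgamma p u w →
        ∃ k : ZMod p, x = some k ∧ k ^ 2 = u * k + w := by
      rintro (_ | k) hx
      · rcases hx with h | ⟨y, h⟩ <;> simp [Spt] at h
      · rcases hx with h | ⟨y, h⟩ <;> simp [Spt] at h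
        exact ⟨k, rfl, by rw [← h.1] at h; exact h.2⟩
    obtain ⟨ka, rfl, hka⟩ := key a ha
    obtain ⟨kb, rfl, hkb⟩ := key b hb
    obtain ⟨kc, rfl, hkc⟩ := key c hc
    have hab' : ka ≠ kb := fun h => hab (by rw [h])
    have hac' : ka ≠ kc := fun h => hac (by rw [h])
    have hbc' : kb ≠ kc := fun h => hbc (by rw [h])
    have sum : ∀ x y : ZMod p, x ≠ y → x ^ 2 = u * x + w → y ^ 2 = u * y + w →
        x + y = u := by
      intro x y hxy hx hy
      have h3 : (x - y) * (x + y - u) = 0 := by linear_combination hx - hy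
      rcases mul_eq_zero.mp h3 with h4 | h4
      · exact absurd (sub_eq_zero.mp h4) hxy
      · linear_combination h4
    have h1 := sum ka kb hab' hka hkb
    have h2 := sum ka kc hac' hka hkc
    exact hbc' (by linear_combination h1 - h2)


/-- (Proposition, part (a)) For every point `P` of the plane not in `S`, the set
`C_P = {v : P ∈ L_v}` is a clique of the graph `G`. -/
theorem clique_of_point_not_in_S (p : ℕ) [Fact p.Prime]
    (Lv : Sym2 (Option (ZMod p)) → Set (ProjPoint p))
    (hLine : ∀ v, Lv v ∈ ProjPoint.Lines p)
    (hoff : ∀ l l' : Option (ZMod p), l ≠ l' →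
      ProjPoint.Spt p l ∈ Lv s(l, l') ∧ ProjPoint.Spt p l' ∈ Lv s(l, l'))
    (hdiag : ∀ l : Option (ZMod p), ProjPoint.Spt p l ∈ Lv s(l, l) ∧
      ∀ t ∈ ProjPoint.S p, t ∈ Lv s(l, l) → t = ProjPoint.Spt p l) :
    ∀ P : ProjPoint p, P ∉ ProjPoint.S p →
      (ProjPoint.G p).IsClique {v : Sym2 (Option (ZMod p)) | P ∈ Lv v} := by
  intro P hP v hv w hw hvw
  refine ⟨hvw, ?_⟩
  rintro x ⟨hxv, hxw⟩
  obtain ⟨y, rfl⟩ := Sym2.mem_iff_exists.mp hxv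
  obtain ⟨z, rfl⟩ := Sym2.mem_iff_exists.mp hxw
  have hxLv : Spt p x ∈ Lv s(x, y) := by
    by_cases h : x = y
    · subst h; exact (hdiag x).1
    · exact (hoff x y h).1
  have hxLw : Spt p x ∈ Lv s(x, z) := by
    by_cases h : x = z
    · subst h; exact (hdiag x).1
    · exact (hoff x z h).1
  have hPne : P ≠ Spt p x := fun h => hP (h ▸ spt_mem_S p x)
  have hLL : Lv s(x, y) = Lv s(x, z) :=
    line_unique (hLine _) (hLine _) hPne hv hxLv hw hxLw
  by_cases hxy : x = y
  · subst hxy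
    by_cases hxz : x = z
    · subst hxz; exact hvw rfl
    · have hz : Spt p z ∈ Lv s(x, x) := hLL ▸ (hoff x z hxz).2
      exact hxz (spt_inj ((hdiag x).2 _ (spt_mem_S p z) hz)).symm
  · by_cases hxz : x = z
    · subst hxz
      have hy : Spt p y ∈ Lv s(x, x) := hLL ▸ (hoff x y hxy).2
      exact hxy (spt_inj ((hdiag x).2 _ (spt_mem_S p y) hy)).symm
    · have hyz : y ≠ z := fun h => hvw (by rw [h])
      have hy : Spt p y ∈ Lv s(x, y) := (hoff x y hxy).2
      have hz : Spt p z ∈ Lv s(x, y) := hLL.symm ▸ (hoff x z hxz).2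
      exact arc (hLine s(x, y)) hxy hxz hyz hxLv hy hz
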